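/- For the one-dimensional model problem, the symmetric matrix R with diagonal blocks (ε Δx)/Δt · I and (χ Δx)/Δt · I (with χ = μ ε²) and off-diagonal block (ε/2) D, where D is the 1-D difference matrix with entries in {-1, 0, 1} and at most two nonzero entries per row, is positive definite whenever Δt < Δx √(μ ε). -/

import Mathlib

open Matrix

theorem quadform {p q : ℕ} (a b c : ℝ) (D : Matrix (Fin q) (Fin p) ℝ) (u : Fin p → ℝ) (v : Fin q → ℝ) :
    (Sum.elim u v) ⬝ᵥ ((Matrix.fromBlocks (a • (1 : Matrix (Fin p) (Fin p) ℝ)) (c • Dᵀ)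
      (c • D) (b • (1 : Matrix (Fin q) (Fin q) ℝ))) *ᵥ Sum.elim u v)
    = a * (∑ i, u i ^ 2) + b * (∑ j, v j ^ 2) + 2 * c * ∑ j, ∑ i, v j * D j i * u i := by
  rw [fromBlocks_mulVec, sumElim_dotProduct_sumElim]
  simp only [Sum.elim_comp_inl, Sum.elim_comp_inr]
  simp only [dotProduct, Pi.add_apply, mulVec, Matrix.smul_apply, smul_eq_mul, Matrix.one_apply, mul_ite,
    mul_one, mul_zero, ite_mul, zero_mul, Finset.sum_ite_eq, Finset.mem_univ, if_true,
    transpose_apply, Finset.sum_add_distrib, Finset.mul_sum, mul_add, add_mul]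
  rw [Finset.sum_comm (s := (Finset.univ : Finset (Fin p)))]
  have e1 : ∑ x : Fin p, u x * (a * u x) = ∑ i : Fin p, a * u i ^ 2 :=
    Finset.sum_congr rfl fun _ _ => by ring
  have e2 : ∑ x : Fin q, v x * (b * v x) = ∑ i : Fin q, b * v i ^ 2 :=
    Finset.sum_congr rfl fun _ _ => by ring
  have e3 : ((∑ i : Fin q, ∑ x : Fin p, u x * (c * D i x * v i)) +
      ∑ x : Fin q, ∑ i : Fin p, v x * (c * D x i * u i)) =
      ∑ x : Fin q, ∑ i : Fin p, 2 * c * (v x * D x i * u i) := by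
    rw [← Finset.sum_add_distrib]
    refine Finset.sum_congr rfl fun j _ => ?_
    rw [← Finset.sum_add_distrib]
    exact Finset.sum_congr rfl fun i _ => by ring
  linarith [e1, e2, e3]

theorem abs_sum_le_two {n : ℕ} (f : Fin n → ℝ)
    (hval : ∀ j, f j = 1 ∨ f j = -1 ∨ f j = 0)
    (h1 : (Finset.univ.filter fun j => f j = 1).card ≤ 1)
    (h2 : (Finset.univ.filter fun j => f j = -1).card ≤ 1) :
    ∑ j, |f j| ≤ 2 := by
  have key : ∀ j, |f j| ≤ (if f j = 1 then (1:ℝ) else 0) + (if f j = -1 then (1:ℝ) else 0) := by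
    intro j
    rcases hval j with h | h | h <;> rw [h] <;> norm_num
  calc ∑ j, |f j| ≤ ∑ j, ((if f j = 1 then (1:ℝ) else 0) + (if f j = -1 then (1:ℝ) else 0)) :=
        Finset.sum_le_sum fun j _ => key j
    _ = ((Finset.univ.filter fun j => f j = 1).card : ℝ)
        + ((Finset.univ.filter fun j => f j = -1).card : ℝ) := by
        rw [Finset.sum_add_distrib, Finset.sum_boole, Finset.sum_boole]
    _ ≤ 1 + 1 := by
        have a1 : ((Finset.univ.filter fun j => f j = 1).card : ℝ) ≤ 1 := by exact_mod_cast h1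
        have a2 : ((Finset.univ.filter fun j => f j = -1).card : ℝ) ≤ 1 := by exact_mod_cast h2
        linarith
    _ = 2 := by norm_num

/-- 1-D model problem: the P-FDTD system matrix
`R = [[(εΔx/Δt) I, (ε/2) Dᵀ],[(ε/2) D, (χΔx/Δt) I]]` with `χ = με²` and `D`
an incidence-type difference matrix (each row and each column has at most one
`+1` and at most one `-1`, all other entries `0`) is positive definite
whenever `Δt < Δx √(με)`. -/
theorem stmt8 {p q : ℕ} (ε μ Δx Δt : ℝ)
    (hε : 0 < ε) (hμ : 0 < μ) (hΔx : 0 < Δx) (hΔt : 0 < Δt)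
    (D : Matrix (Fin q) (Fin p) ℝ)
    (hval : ∀ i j, D i j = 1 ∨ D i j = -1 ∨ D i j = 0)
    (hrow : ∀ i, (Finset.univ.filter fun j => D i j = 1).card ≤ 1 ∧
                 (Finset.univ.filter fun j => D i j = -1).card ≤ 1)
    (hcol : ∀ j, (Finset.univ.filter fun i => D i j = 1).card ≤ 1 ∧
                 (Finset.univ.filter fun i => D i j = -1).card ≤ 1)
    (hCFL : Δt < Δx * Real.sqrt (μ * ε)) :
    (Matrix.fromBlocks
      ((ε * Δx / Δt) • (1 : Matrix (Fin p) (Fin p) ℝ)) ((ε / 2) • Dᵀ)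
      ((ε / 2) • D) ((μ * ε ^ 2 * Δx / Δt) • (1 : Matrix (Fin q) (Fin q) ℝ))).PosDef := by
  set t := Real.sqrt (μ * ε) with htdef
  have ht : 0 < t := Real.sqrt_pos.mpr (mul_pos hμ hε)
  have ht2 : t ^ 2 = μ * ε := Real.sq_sqrt (mul_pos hμ hε).le
  set a := ε * Δx / Δt with hadef
  set b := μ * ε ^ 2 * Δx / Δt with hbdef
  have ha : 0 < a := by positivity
  have hb : 0 < b := by positivity
  -- key scalar inequalities
  have hta : ε < t * a := by
    rw [hadef, show t * (ε * Δx / Δt) = t * (ε * Δx) / Δt by ring, lt_div_iff₀ hΔt]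
    nlinarith [mul_lt_mul_of_pos_left hCFL hε]
  have htb : ε * t ^ 2 < t * b := by
    rw [hbdef, show t * (μ * ε ^ 2 * Δx / Δt) = t * (μ * ε ^ 2 * Δx) / Δt by ring,
      lt_div_iff₀ hΔt, ht2]
    nlinarith [mul_lt_mul_of_pos_left hCFL (show (0:ℝ) < μ * ε ^ 2 by positivity)]
  rw [posDef_iff_dotProduct_mulVec]
  constructor
  · show _ = _
    simp [conjTranspose_eq_transpose_of_trivial, fromBlocks_transpose, transpose_smul,
      transpose_one, transpose_transpose]
  · intro x hx
    set u : Fin p → ℝ := fun i => x (Sum.inl i) with hu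
    set v : Fin q → ℝ := fun j => x (Sum.inr j) with hv
    have hxe : x = Sum.elim u v := by funext k; cases k <;> rfl
    have hstar : star x = x := by funext k; simp
    rw [hstar, hxe, quadform]
    set U := ∑ i, u i ^ 2 with hUdef
    set V := ∑ j, v j ^ 2 with hVdef
    set S := ∑ j, ∑ i, v j * D j i * u i with hSdef
    have hU : 0 ≤ U := Finset.sum_nonneg fun i _ => sq_nonneg _
    have hV : 0 ≤ V := Finset.sum_nonneg fun j _ => sq_nonneg _
    -- x ≠ 0 gives U + V > 0
    obtain ⟨k, hk⟩ := Function.ne_iff.mp hx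
    have this : 0 < U ∨ 0 < V := by
        cases k with
        | inl i =>
          left
          have h1 : 0 < u i ^ 2 := sq_pos_of_ne_zero hk
          exact lt_of_lt_of_le h1 (Finset.single_le_sum (fun i _ => sq_nonneg (u i)) (Finset.mem_univ i))
        | inr j =>
          right
          have h1 : 0 < v j ^ 2 := sq_pos_of_ne_zero hk
          exact lt_of_lt_of_le h1 (Finset.single_le_sum (fun j _ => sq_nonneg (v j)) (Finset.mem_univ j))
    -- row and column absolute sums
    have row : ∀ j, ∑ i, |D j i| ≤ 2 := fun j =>
      abs_sum_le_two (fun i => D j i) (fun i => hval j i) (hrow j).1 (hrow j).2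
    have col : ∀ i, ∑ j, |D j i| ≤ 2 := fun i =>
      abs_sum_le_two (fun j => D j i) (fun j => hval j i) (hcol i).1 (hcol i).2
    -- bound the cross term
    have bound1 : ∑ j, ∑ i, |D j i| * (t ^ 2 * v j ^ 2) ≤ 2 * (t ^ 2 * V) := by
      calc ∑ j, ∑ i, |D j i| * (t ^ 2 * v j ^ 2)
          = ∑ j, (∑ i, |D j i|) * (t ^ 2 * v j ^ 2) := by
            exact Finset.sum_congr rfl fun j _ => (Finset.sum_mul ..).symm
        _ ≤ ∑ j, 2 * (t ^ 2 * v j ^ 2) := by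
            refine Finset.sum_le_sum fun j _ => ?_
            exact mul_le_mul_of_nonneg_right (row j) (by positivity)
        _ = 2 * (t ^ 2 * V) := by rw [hVdef, Finset.mul_sum, Finset.mul_sum]
    have bound2 : ∑ j, ∑ i, |D j i| * u i ^ 2 ≤ 2 * U := by
      rw [Finset.sum_comm]
      calc ∑ i, ∑ j, |D j i| * u i ^ 2
          = ∑ i, (∑ j, |D j i|) * u i ^ 2 := by
            exact Finset.sum_congr rfl fun i _ => (Finset.sum_mul ..).symm
        _ ≤ ∑ i, 2 * u i ^ 2 := by
            refine Finset.sum_le_sum fun i _ => ?_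
            exact mul_le_mul_of_nonneg_right (col i) (sq_nonneg _)
        _ = 2 * U := by rw [hUdef, Finset.mul_sum]
    have hts : -(t ^ 2 * V + U) ≤ t * S := by
      have pt : ∀ j i, -(|D j i| * (t ^ 2 * v j ^ 2) / 2 + |D j i| * u i ^ 2 / 2)
          ≤ t * (v j * D j i * u i) := by
        intro j i
        have h1 : |t * (v j * D j i * u i)| = |D j i| * (|t * v j| * |u i|) := by
          rw [show t * (v j * D j i * u i) = D j i * (t * v j * u i) by ring, abs_mul, abs_mul]
        have h2 : |t * v j| * |u i| ≤ (t ^ 2 * v j ^ 2 + u i ^ 2) / 2 := by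
          nlinarith [sq_nonneg (|t * v j| - |u i|), sq_abs (t * v j), sq_abs (u i)]
        have h3 : |t * (v j * D j i * u i)| ≤ |D j i| * (t ^ 2 * v j ^ 2) / 2
            + |D j i| * u i ^ 2 / 2 := by
          rw [h1]
          have := mul_le_mul_of_nonneg_left h2 (abs_nonneg (D j i))
          linarith
        linarith [neg_abs_le (t * (v j * D j i * u i))]
      calc -(t ^ 2 * V + U)
          ≤ -((∑ j, ∑ i, |D j i| * (t ^ 2 * v j ^ 2)) / 2 + (∑ j, ∑ i, |D j i| * u i ^ 2) / 2) := by
            linarith [bound1, bound2]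
        _ = ∑ j, ∑ i, -(|D j i| * (t ^ 2 * v j ^ 2) / 2 + |D j i| * u i ^ 2 / 2) := by
            rw [Finset.sum_div, Finset.sum_div, ← Finset.sum_add_distrib,
              ← Finset.sum_neg_distrib]
            refine Finset.sum_congr rfl fun j _ => ?_
            rw [Finset.sum_div, Finset.sum_div, ← Finset.sum_add_distrib,
              ← Finset.sum_neg_distrib]
        _ ≤ ∑ j, ∑ i, t * (v j * D j i * u i) :=
            Finset.sum_le_sum fun j _ => Finset.sum_le_sum fun i _ => pt j i
        _ = t * S := by rw [hSdef, Finset.mul_sum]; exact Finset.sum_congr rfl fun j _ => (Finset.mul_sum ..).symm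
    -- conclude
    have h4 : ε * (-(t ^ 2 * V + U)) ≤ ε * (t * S) := mul_le_mul_of_nonneg_left hts hε.le
    have h5 : 0 < (t * a - ε) * U + (t * b - ε * t ^ 2) * V := by
      rcases this with hU' | hV'
      · have c1 := mul_pos (sub_pos.mpr hta) hU'
        have c2 := mul_nonneg (sub_pos.mpr htb).le hV
        linarith
      · have c1 := mul_nonneg (sub_pos.mpr hta).le hU
        have c2 := mul_pos (sub_pos.mpr htb) hV'
        linarith
    have key : 0 < t * (a * U + b * V + 2 * (ε / 2) * S) := by
      have expand : t * (a * U + b * V + 2 * (ε / 2) * S)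
          = (t * a - ε) * U + (t * b - ε * t ^ 2) * V
            + (ε * (t * S) - ε * (-(t ^ 2 * V + U))) := by ring
      rw [expand]
      linarith [h4, h5]
    by_contra hC
    push_neg at hC
    nlinarith [key, mul_nonneg ht.le (neg_nonneg.mpr hC)]
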